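/- The elementary cellular automaton with Wolfram number 41, i.e. the CA f on {0,1}^ℤ with f(x)_i = 1 if and only if (x_{i-1}, x_i, x_{i+1}) ∈ {(0,0,0), (0,1,1), (1,0,1)}, is not von Neumann regular in End({0,1}^ℤ). -/

import Mathlib

/-- The shift map on the full shift `A^ℤ`: `σ(x)_i = x_{i+1}`. -/
def shiftMap {A : Type*} (x : ℤ → A) : ℤ → A := fun i => x (i + 1)

/-- A cellular automaton on the full shift `A^ℤ` (with the product topology,
`A` discrete): a continuous map commuting with the shift. -/
def IsCA {A : Type*} [TopologicalSpace A] (f : (ℤ → A) → (ℤ → A)) : Prop :=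
  Continuous f ∧ ∀ x, f (shiftMap x) = shiftMap (f x)

/-- `f` is von Neumann regular in the monoid `End(A^ℤ)` of cellular automata:
there is a CA `h` with `f ∘ h ∘ f = f` and `h ∘ f ∘ h = h`. -/
def IsRegularCA {A : Type*} [TopologicalSpace A] (f : (ℤ → A) → (ℤ → A)) : Prop :=
  ∃ h : (ℤ → A) → (ℤ → A), IsCA h ∧ f ∘ h ∘ f = f ∧ h ∘ f ∘ h = h

/-- The elementary cellular automaton with Wolfram number 41 is not von
Neumann regular in End({0,1}^ℤ). Here 1 is represented by `true`. -/
theorem stmt13 (f : (ℤ → Bool) → (ℤ → Bool))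
    (hf : ∀ (x : ℤ → Bool) (i : ℤ), f x i = true ↔
      (x (i - 1), x i, x (i + 1)) = (false, false, false) ∨
      (x (i - 1), x i, x (i + 1)) = (false, true, true) ∨
      (x (i - 1), x i, x (i + 1)) = (true, false, true)) :
    ¬ IsRegularCA f := by
  rintro ⟨h, ⟨-, hcomm⟩, hfhf, -⟩
  -- the period-6 configuration (0,0,0,1,0,1)^∞
  set x : ℤ → Bool := fun i => decide (i % 6 = 3) || decide (i % 6 = 5) with hxdef
  set y : ℤ → Bool := f x with hydef
  -- its image is the period-3 configuration (0,1,0)^∞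
  have hy : ∀ i : ℤ, y i = decide (i % 3 = 1) := by
    intro i
    have hi := hf x i
    have h6 : i % 6 = 0 ∨ i % 6 = 1 ∨ i % 6 = 2 ∨ i % 6 = 3 ∨ i % 6 = 4 ∨ i % 6 = 5 := by
      omega
    rcases h6 with h | h | h | h | h | h <;>
    · have e1 : (i - 1) % 6 = (i - 1) % 6 := rfl
      have e3 : i % 3 = i % 3 := rfl
      simp only [hxdef] at hi
      rw [show (i - 1) % 6 = ((i % 6) + 5) % 6 from by omega,
          show (i + 1) % 6 = ((i % 6) + 1) % 6 from by omega, h] at hi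
      rw [show i % 3 = (i % 6) % 3 from by omega, h]
      simp only [hydef] at *
      norm_num at hi ⊢
      exact hi
  -- y has period 3
  have hy3 : shiftMap (shiftMap (shiftMap y)) = y := by
    funext i
    simp only [shiftMap, hy]
    have : (i + 1 + 1 + 1) % 3 = 1 ↔ i % 3 = 1 := by omega
    simp [this]
  -- hence z := h y has period 3
  set z : ℤ → Bool := h y with hzdef
  have hz3 : ∀ i : ℤ, z (i + 3) = z i := by
    intro i
    have : h (shiftMap (shiftMap (shiftMap y))) = shiftMap (shiftMap (shiftMap (h y))) := by
      rw [hcomm, hcomm, hcomm]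
    rw [hy3] at this
    have := congrFun this i
    simp only [shiftMap, hzdef] at this ⊢
    rw [this]
    ring_nf
  -- and f z = y
  have hfz : f z = y := by
    have := congrFun hfhf x
    simpa [hzdef, hydef] using this
  -- evaluate the local rule at 0, 1, 2 and derive a contradiction
  have hzm1 : z (-1) = z 2 := by have := hz3 (-1); norm_num at this; rw [this]
  have hz4 : z 3 = z 0 := by have := hz3 0; norm_num at this; rw [this]
  have h0 := hf z 0
  have h1 := hf z 1
  have h2 := hf z 2
  rw [hfz] at h0 h1 h2
  rw [hy 0] at h0
  rw [hy 1] at h1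
  rw [hy 2] at h2
  norm_num at h0 h1 h2
  rw [hzm1] at h0
  rw [hz4] at h2
  rcases ha : z 0 <;> rcases hb : z 1 <;> rcases hc : z 2 <;> simp_all
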